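/- arXiv:1606.07034 — 2 statements merged into one kernel-verified Lean document; each statement's English description precedes it below -/
import Mathlib

section
/- Let μ be a probability measure and f, g square-integrable functions. Then the covariance satisfies μ(f²; g) ≤ c̃·(μ(f²))^{1/2}·( μ( |f − μf|²·(g² + μ(g²)) ) )^{1/2} for a universal constant c̃ ≥ 1, where μ(f²; g) := μ(f²·g) − μ(f²)·μ(g). -/
open MeasureTheory

lemma my_cs {α : Type} [MeasurableSpace α] (μ : Measure α) (u v : α → ℝ)
    (hu : MemLp u 2 μ) (hv : MemLp v 2 μ) :
    ∫ x, u x * v x ∂μ ≤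
      Real.sqrt (∫ x, u x ^ 2 ∂μ) * Real.sqrt (∫ x, v x ^ 2 ∂μ) := by
  have h2 : (ENNReal.ofReal (2:ℝ)) = 2 := by norm_num
  have hconj : Real.HolderConjugate 2 2 := Real.HolderConjugate.two_two
  have key := integral_mul_le_Lp_mul_Lq_of_nonneg (μ := μ) hconj
    (f := fun x => |u x|) (g := fun x => |v x|)
    (Filter.Eventually.of_forall fun x => abs_nonneg _)
    (Filter.Eventually.of_forall fun x => abs_nonneg _)
    (h2 ▸ hu.abs) (h2 ▸ hv.abs)
  have h1 : ∫ x, u x * v x ∂μ ≤ ∫ x, |u x| * |v x| ∂μ := by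
    calc ∫ x, u x * v x ∂μ ≤ ‖∫ x, u x * v x ∂μ‖ := le_abs_self _
    _ ≤ ∫ x, ‖u x * v x‖ ∂μ := norm_integral_le_integral_norm _
    _ = ∫ x, |u x| * |v x| ∂μ := by simp [abs_mul]
  have e1 : ∫ x, |u x| ^ (2:ℝ) ∂μ = ∫ x, u x ^ 2 ∂μ := by
    congr 1; funext x
    rw [show ((2:ℝ) = ((2:ℕ):ℝ)) by norm_num, Real.rpow_natCast, sq_abs]
  have e2 : ∫ x, |v x| ^ (2:ℝ) ∂μ = ∫ x, v x ^ 2 ∂μ := by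
    congr 1; funext x
    rw [show ((2:ℝ) = ((2:ℕ):ℝ)) by norm_num, Real.rpow_natCast, sq_abs]
  calc ∫ x, u x * v x ∂μ ≤ ∫ x, |u x| * |v x| ∂μ := h1
  _ ≤ (∫ x, |u x| ^ (2:ℝ) ∂μ) ^ (1/(2:ℝ)) * (∫ x, |v x| ^ (2:ℝ) ∂μ) ^ (1/(2:ℝ)) := key
  _ = Real.sqrt (∫ x, u x ^ 2 ∂μ) * Real.sqrt (∫ x, v x ^ 2 ∂μ) := by
      rw [e1, e2, Real.sqrt_eq_rpow, Real.sqrt_eq_rpow]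

lemma my_jensen {α : Type} [MeasurableSpace α] (μ : Measure α) [IsProbabilityMeasure μ]
    (g : α → ℝ) (hg : Integrable g μ) (hg2 : Integrable (fun x => g x ^ 2) μ) :
    (∫ x, g x ∂μ) ^ 2 ≤ ∫ x, g x ^ 2 ∂μ := by
  set m := ∫ x, g x ∂μ with hm
  have h0 : 0 ≤ ∫ x, (g x - m) ^ 2 ∂μ := integral_nonneg fun x => sq_nonneg _
  have he : ∫ x, (g x - m) ^ 2 ∂μ = (∫ x, g x ^ 2 ∂μ) - m ^ 2 := by
    have : ∀ x, (g x - m) ^ 2 = (g x ^ 2 - (2*m) * g x) + m ^ 2 := fun x => by ring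
    simp_rw [this]
    have hi1 : Integrable (fun x => g x ^ 2 - (2*m) * g x) μ := hg2.sub (hg.const_mul (2*m))
    have hi2 : Integrable (fun x => (2*m) * g x) μ := hg.const_mul (2*m)
    rw [integral_add hi1 (integrable_const _), integral_sub hg2 hi2,
      MeasureTheory.integral_const_mul, integral_const]
    simp [← hm]; ring
  linarith


/-- Covariance estimate: there is a universal constant `c̃ ≥ 1` such that for any
probability measure `μ` and square-integrable `f, g`,
`μ(f²; g) ≤ c̃ (μ f²)^{1/2} ( μ(|f - μf|² (g² + μ g²)) )^{1/2}`. -/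
theorem covariance_bound :
    ∃ c : ℝ, 1 ≤ c ∧
      ∀ (α : Type) (_ : MeasurableSpace α) (μ : Measure α),
        IsProbabilityMeasure μ → ∀ f g : α → ℝ,
        Integrable f μ → Integrable (fun x => (f x) ^ 2) μ →
        Integrable g μ → Integrable (fun x => (g x) ^ 2) μ →
        Integrable (fun x => (f x) ^ 2 * g x) μ →
        Integrable
          (fun x => (f x - ∫ y, f y ∂μ) ^ 2 * ((g x) ^ 2 + ∫ y, (g y) ^ 2 ∂μ)) μ →
        (∫ x, (f x) ^ 2 * g x ∂μ) - (∫ x, (f x) ^ 2 ∂μ) * (∫ x, g x ∂μ) ≤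
          c * Real.sqrt (∫ x, (f x) ^ 2 ∂μ) *
            Real.sqrt
              (∫ x, (f x - ∫ y, f y ∂μ) ^ 2 * ((g x) ^ 2 + ∫ y, (g y) ^ 2 ∂μ) ∂μ) := by
  refine ⟨3, by norm_num, ?_⟩
  intro α _ μ hprob f g hf hf2 hg hg2 hf2g hbig
  set m := ∫ y, f y ∂μ with hm
  set mg := ∫ y, g y ∂μ with hmg
  set G := ∫ y, (g y) ^ 2 ∂μ with hG
  set u : α → ℝ := fun x => f x + m with hu
  set v : α → ℝ := fun x => (f x - m) * (g x - mg) with hv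
  have hjf : m ^ 2 ≤ ∫ x, (f x) ^ 2 ∂μ := my_jensen μ f hf hf2
  have hjg : mg ^ 2 ≤ G := my_jensen μ g hg hg2
  have hf2nn : 0 ≤ ∫ x, (f x) ^ 2 ∂μ := integral_nonneg fun x => sq_nonneg _
  have hGnn : 0 ≤ G := integral_nonneg fun x => sq_nonneg _
  -- integrability facts
  have hA : Integrable (fun x => (f x) ^ 2 * (g x - mg)) μ := by
    have := hf2g.sub (hf2.mul_const mg)
    refine this.congr (Filter.Eventually.of_forall fun x => ?_)
    simp; ring
  have hB : Integrable (fun x => m ^ 2 * (g x - mg)) μ :=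
    (hg.sub (integrable_const mg)).const_mul _
  -- u ∈ L²
  have hu2int : Integrable (fun x => u x ^ 2) μ := by
    have h : (fun x => u x ^ 2) = fun x => ((f x) ^ 2 + (2*m) * f x) + m ^ 2 :=
      funext fun x => by simp [hu]; ring
    rw [h]; exact (hf2.add (hf.const_mul (2*m))).add (integrable_const _)
  have huL2 : MemLp u 2 μ :=
    (memLp_two_iff_integrable_sq ((hf.1.add aestronglyMeasurable_const))).2 hu2int
  -- pointwise bound for v²
  have hvb : ∀ x, v x ^ 2 ≤ 2 * ((f x - m) ^ 2 * ((g x) ^ 2 + G)) := by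
    intro x
    have h1 : (g x - mg) ^ 2 ≤ 2 * ((g x) ^ 2 + G) := by nlinarith [sq_nonneg (g x + mg)]
    have : v x ^ 2 = (f x - m) ^ 2 * (g x - mg) ^ 2 := by simp [hv]; ring
    rw [this]
    calc (f x - m) ^ 2 * (g x - mg) ^ 2
        ≤ (f x - m) ^ 2 * (2 * ((g x) ^ 2 + G)) :=
          mul_le_mul_of_nonneg_left h1 (sq_nonneg _)
      _ = 2 * ((f x - m) ^ 2 * ((g x) ^ 2 + G)) := by ring
  have hvmeas : AEStronglyMeasurable v μ :=
    (hf.1.sub aestronglyMeasurable_const).mul (hg.1.sub aestronglyMeasurable_const)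
  have hv2int : Integrable (fun x => v x ^ 2) μ := by
    refine Integrable.mono' (hbig.const_mul 2) (hvmeas.mul hvmeas |>.congr ?_) ?_
    · exact Filter.Eventually.of_forall fun x => (sq (v x)).symm
    · refine Filter.Eventually.of_forall fun x => ?_
      rw [Real.norm_of_nonneg (sq_nonneg _)]
      exact hvb x
  have hvL2 : MemLp v 2 μ := (memLp_two_iff_integrable_sq hvmeas).2 hv2int
  -- identity: LHS = ∫ u v
  have hzero : ∫ x, m ^ 2 * (g x - mg) ∂μ = 0 := by
    rw [MeasureTheory.integral_const_mul, integral_sub hg (integrable_const _), integral_const]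
    simp [← hmg]
  have hid : (∫ x, (f x) ^ 2 * g x ∂μ) - (∫ x, (f x) ^ 2 ∂μ) * mg = ∫ x, u x * v x ∂μ := by
    have e1 : ∫ x, u x * v x ∂μ
        = (∫ x, (f x) ^ 2 * (g x - mg) ∂μ) - ∫ x, m ^ 2 * (g x - mg) ∂μ := by
      rw [← integral_sub hA hB]
      congr 1; funext x; simp [hu, hv]; ring
    have e2 : ∫ x, (f x) ^ 2 * (g x - mg) ∂μ
        = (∫ x, (f x) ^ 2 * g x ∂μ) - (∫ x, (f x) ^ 2 ∂μ) * mg := by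
      rw [show (fun x => (f x) ^ 2 * (g x - mg)) = fun x => (f x) ^ 2 * g x - (f x) ^ 2 * mg
          from funext fun x => by ring,
        integral_sub hf2g (hf2.mul_const mg), MeasureTheory.integral_mul_const]
    rw [e1, e2, hzero]; ring
  -- Cauchy-Schwarz
  have hcs := my_cs μ u v huL2 hvL2
  -- bound ∫ u²
  have hu2 : ∫ x, u x ^ 2 ∂μ ≤ 4 * ∫ x, (f x) ^ 2 ∂μ := by
    have h : (fun x => u x ^ 2) = fun x => ((f x) ^ 2 + (2*m) * f x) + m ^ 2 :=
      funext fun x => by simp [hu]; ring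
    have hi1 : Integrable (fun x => (f x) ^ 2 + 2 * m * f x) μ := hf2.add (hf.const_mul (2*m))
    have hi2 : Integrable (fun x => 2 * m * f x) μ := hf.const_mul (2*m)
    rw [h, integral_add hi1 (integrable_const _),
      integral_add hf2 hi2, MeasureTheory.integral_const_mul, integral_const]
    simp [← hm]
    nlinarith
  -- bound ∫ v²
  have hI := hbig
  have hInn : 0 ≤ ∫ x, (f x - m) ^ 2 * ((g x) ^ 2 + G) ∂μ :=
    integral_nonneg fun x => mul_nonneg (sq_nonneg _) (by positivity)
  have hv2 : ∫ x, v x ^ 2 ∂μ ≤ 2 * ∫ x, (f x - m) ^ 2 * ((g x) ^ 2 + G) ∂μ := by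
    rw [← MeasureTheory.integral_const_mul]
    exact integral_mono hv2int (hbig.const_mul 2) hvb
  -- sqrt bounds
  have hs1 : Real.sqrt (∫ x, u x ^ 2 ∂μ) ≤ 2 * Real.sqrt (∫ x, (f x) ^ 2 ∂μ) := by
    calc Real.sqrt (∫ x, u x ^ 2 ∂μ) ≤ Real.sqrt (4 * ∫ x, (f x) ^ 2 ∂μ) :=
          Real.sqrt_le_sqrt hu2
      _ = 2 * Real.sqrt (∫ x, (f x) ^ 2 ∂μ) := by
          rw [Real.sqrt_mul (by norm_num : (0:ℝ) ≤ 4),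
            show (4:ℝ) = 2 ^ 2 by norm_num, Real.sqrt_sq (by norm_num : (0:ℝ) ≤ 2)]
  have hs2 : Real.sqrt (∫ x, v x ^ 2 ∂μ)
      ≤ Real.sqrt 2 * Real.sqrt (∫ x, (f x - m) ^ 2 * ((g x) ^ 2 + G) ∂μ) := by
    calc Real.sqrt (∫ x, v x ^ 2 ∂μ)
        ≤ Real.sqrt (2 * ∫ x, (f x - m) ^ 2 * ((g x) ^ 2 + G) ∂μ) := Real.sqrt_le_sqrt hv2
      _ = _ := Real.sqrt_mul (by norm_num) _
  have hsqrt2 : Real.sqrt 2 ≤ 3/2 := by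
    nlinarith [Real.sq_sqrt (by norm_num : (0:ℝ) ≤ 2), Real.sqrt_nonneg 2]
  -- combine
  rw [← hm, ← hmg, ← hG] at *
  rw [hid]
  calc ∫ x, u x * v x ∂μ
      ≤ Real.sqrt (∫ x, u x ^ 2 ∂μ) * Real.sqrt (∫ x, v x ^ 2 ∂μ) := hcs
    _ ≤ (2 * Real.sqrt (∫ x, (f x) ^ 2 ∂μ)) *
        (Real.sqrt 2 * Real.sqrt (∫ x, (f x - m) ^ 2 * ((g x) ^ 2 + G) ∂μ)) := by
        apply mul_le_mul hs1 hs2 (Real.sqrt_nonneg _)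
        positivity
    _ ≤ 3 * Real.sqrt (∫ x, (f x) ^ 2 ∂μ) *
        Real.sqrt (∫ x, (f x - m) ^ 2 * ((g x) ^ 2 + G) ∂μ) := by
        have h1 : (0:ℝ) ≤ Real.sqrt (∫ x, (f x) ^ 2 ∂μ) := Real.sqrt_nonneg _
        have h2 : (0:ℝ) ≤ Real.sqrt (∫ x, (f x - m) ^ 2 * ((g x) ^ 2 + G) ∂μ) :=
          Real.sqrt_nonneg _
        have h3 : 2 * Real.sqrt 2 ≤ 3 := by linarith
        calc 2 * Real.sqrt (∫ x, (f x) ^ 2 ∂μ) *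
            (Real.sqrt 2 * Real.sqrt (∫ x, (f x - m) ^ 2 * ((g x) ^ 2 + G) ∂μ))
            = (2 * Real.sqrt 2) * (Real.sqrt (∫ x, (f x) ^ 2 ∂μ) *
              Real.sqrt (∫ x, (f x - m) ^ 2 * ((g x) ^ 2 + G) ∂μ)) := by ring
          _ ≤ 3 * (Real.sqrt (∫ x, (f x) ^ 2 ∂μ) *
              Real.sqrt (∫ x, (f x - m) ^ 2 * ((g x) ^ 2 + G) ∂μ)) :=
              mul_le_mul_of_nonneg_right h3 (mul_nonneg h1 h2)
          _ = 3 * Real.sqrt (∫ x, (f x) ^ 2 ∂μ) *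
              Real.sqrt (∫ x, (f x - m) ^ 2 * ((g x) ^ 2 + G) ∂μ) := by ring
end

section
/- Let E be a probability expectation. For any nonnegative f with f log f integrable, there exists a constant A > 0 (independent of f) such that Ent_E(f²) ≤ A·E(f − E f)² + Ent_E((f − Ef)²), where Ent_E(g) = E(g·log(g/E g)). -/
open MeasureTheory

/-- Tangent-line bound: `-s² log s² ≤ y - s² - s² log y` for `y > 0`. -/
lemma rothaus_tangent (s y : ℝ) (hy : 0 < y) :
    -(s ^ 2 * Real.log (s ^ 2)) ≤ y - s ^ 2 - s ^ 2 * Real.log y := by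
  rcases eq_or_ne s 0 with h | h
  · simp [h]; linarith
  · have hs2 : 0 < s ^ 2 := by positivity
    have h1 : Real.log (y / s ^ 2) ≤ y / s ^ 2 - 1 :=
      Real.log_le_sub_one_of_pos (by positivity)
    rw [Real.log_div hy.ne' hs2.ne'] at h1
    have h2 := mul_le_mul_of_nonneg_left h1 hs2.le
    have e : s ^ 2 * (y / s ^ 2 - 1) = y - s ^ 2 := by field_simp
    nlinarith [h2]

set_option maxHeartbeats 1000000 in
/-- The key pointwise inequality behind the Rothaus bound. -/
lemma rothaus_ptwise (a b2 s : ℝ) (ha : 0 < a) (hb : 0 < b2) (hs : -a ≤ s) :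
    (a + s) ^ 2 * Real.log ((a + s) ^ 2) - s ^ 2 * Real.log (s ^ 2) ≤
      (25 + Real.log (a ^ 2 + b2) - Real.log b2) * s ^ 2
        + 2 * a * (1 + Real.log (a ^ 2)) * s + b2 + a ^ 2 * Real.log (a ^ 2 + b2) := by
  have ht : (0 : ℝ) < a ^ 2 + b2 := by positivity
  have ha2 : (0 : ℝ) < a ^ 2 := by positivity
  have hLaLt : Real.log (a ^ 2) ≤ Real.log (a ^ 2 + b2) :=
    Real.log_le_log ha2 (by linarith)
  have hLbLt : Real.log b2 ≤ Real.log (a ^ 2 + b2) :=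
    Real.log_le_log hb (by linarith)
  have htan := rothaus_tangent s b2 hb
  rcases le_or_gt s (-(a / 2)) with h3 | h3
  · -- Region III : -a ≤ s ≤ -a/2
    have hu0 : 0 ≤ a + s := by linarith
    have hu1 : a + s ≤ a / 2 := by linarith
    have hs2 : a ^ 2 / 4 ≤ s ^ 2 := by nlinarith
    have hlog4 : (0 : ℝ) ≤ Real.log 4 := Real.log_nonneg (by norm_num)
    have h1 : (a + s) ^ 2 * Real.log ((a + s) ^ 2) ≤
        (a + s) ^ 2 * (Real.log (a ^ 2 + b2) - Real.log 4) := by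
      rcases eq_or_lt_of_le hu0 with h0 | h0
      · rw [← h0]; simp
      · have h4 : (a + s) ^ 2 ≤ (a ^ 2 + b2) / 4 := by nlinarith
        have h5 := Real.log_le_log (by positivity : (0:ℝ) < (a + s) ^ 2) h4
        rw [Real.log_div ht.ne' (by norm_num : (4:ℝ) ≠ 0)] at h5
        exact mul_le_mul_of_nonneg_left h5 (by positivity)
    have hnn4 : 0 ≤ (a + s) ^ 2 * Real.log 4 := mul_nonneg (sq_nonneg _) hlog4
    rcases le_or_gt (1 + Real.log (a ^ 2) - Real.log (a ^ 2 + b2)) 0 with hq | hq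
    · have hprod : 0 ≤ 2 * a * s * (1 + Real.log (a ^ 2) - Real.log (a ^ 2 + b2)) := by
        nlinarith [mul_nonneg (by linarith : (0:ℝ) ≤ -s)
          (by linarith : (0:ℝ) ≤ -(1 + Real.log (a ^ 2) - Real.log (a ^ 2 + b2)))]
      linarith [h1, htan, hprod, hnn4, hs2, sq_nonneg s]
    · have hle1 : 1 + Real.log (a ^ 2) - Real.log (a ^ 2 + b2) ≤ 1 := by linarith
      have hprod : -(2 * a ^ 2) ≤ 2 * a * s * (1 + Real.log (a ^ 2) - Real.log (a ^ 2 + b2)) := by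
        have h6 : (-s) * (1 + Real.log (a ^ 2) - Real.log (a ^ 2 + b2)) ≤ a * 1 :=
          mul_le_mul (by linarith) hle1 hq.le ha.le
        nlinarith [h6]
      linarith [h1, htan, hprod, hnn4, hs2, sq_nonneg s]
  · rcases le_or_gt s (a / 2) with h2 | h2
    · -- Region I : -a/2 < s ≤ a/2
      have hupos : 0 < a + s := by linarith
      have hu2 : (0 : ℝ) < (a + s) ^ 2 := by positivity
      have hA : a ^ 2 * (Real.log ((a + s) ^ 2) - Real.log (a ^ 2)) ≤ (a + s) ^ 2 - a ^ 2 := by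
        have h := Real.log_le_sub_one_of_pos (show (0:ℝ) < (a + s) ^ 2 / a ^ 2 by positivity)
        rw [Real.log_div hu2.ne' ha2.ne'] at h
        have h7 := mul_le_mul_of_nonneg_left h ha2.le
        have e : a ^ 2 * ((a + s) ^ 2 / a ^ 2 - 1) = (a + s) ^ 2 - a ^ 2 := by field_simp
        linarith [h7, e.le, e.ge]
      have hB : (a + s) ^ 2 - a ^ 2 ≤ (a + s) ^ 2 * (Real.log ((a + s) ^ 2) - Real.log (a ^ 2)) := by
        have h := Real.log_le_sub_one_of_pos (show (0:ℝ) < a ^ 2 / (a + s) ^ 2 by positivity)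
        rw [Real.log_div ha2.ne' hu2.ne'] at h
        have h7 := mul_le_mul_of_nonneg_left h hu2.le
        have e : (a + s) ^ 2 * (a ^ 2 / (a + s) ^ 2 - 1) = a ^ 2 - (a + s) ^ 2 := by field_simp
        linarith [h7, e.le, e.ge]
      have hprod : (2 * a * s + s ^ 2) * (Real.log ((a + s) ^ 2) - Real.log (a ^ 2)) ≤ 25 * s ^ 2 := by
        rcases le_or_gt 0 s with hs0 | hs0
        · have hfac : 0 ≤ 2 * a * s + s ^ 2 := by
            nlinarith [mul_nonneg ha.le hs0, sq_nonneg s]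
          have h5 := mul_le_mul_of_nonneg_left hA hfac
          have hcube : 0 ≤ (a / 2 - s) * s ^ 2 := mul_nonneg (by linarith) (sq_nonneg s)
          have hquart : 0 ≤ ((a / 2) ^ 2 - s ^ 2) * s ^ 2 :=
            mul_nonneg (by nlinarith) (sq_nonneg s)
          have hp2 : (2 * a * s + s ^ 2) ^ 2 ≤ 25 * a ^ 2 * s ^ 2 := by
            nlinarith [hcube, hquart, mul_nonneg ha.le (mul_nonneg (by linarith : (0:ℝ) ≤ a / 2 - s) (sq_nonneg s))]
          have h7 : a ^ 2 * ((2 * a * s + s ^ 2) * (Real.log ((a + s) ^ 2) - Real.log (a ^ 2))) ≤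
              a ^ 2 * (25 * s ^ 2) := by linarith [h5, hp2]
          exact le_of_mul_le_mul_left h7 ha2
        · have hfac : 2 * a * s + s ^ 2 ≤ 0 := by nlinarith
          have h5 := mul_le_mul_of_nonpos_left hB hfac
          have hhh : (2 * a + s) ^ 2 ≤ 25 * (a + s) ^ 2 := by
            nlinarith [mul_pos (by linarith : (0:ℝ) < 3 * a + 4 * s)
              (by linarith : (0:ℝ) < 7 * a + 6 * s)]
          have h8 := mul_le_mul_of_nonneg_left hhh (sq_nonneg s)
          have h7 : (a + s) ^ 2 * ((2 * a * s + s ^ 2) * (Real.log ((a + s) ^ 2) - Real.log (a ^ 2))) ≤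
              (a + s) ^ 2 * (25 * s ^ 2) := by linarith [h5, h8]
          exact le_of_mul_le_mul_left h7 hu2
      have hmono : 0 ≤ (s ^ 2 + a ^ 2) * (Real.log (a ^ 2 + b2) - Real.log (a ^ 2)) :=
        mul_nonneg (by positivity) (by linarith)
      have eid : (a + s) ^ 2 * Real.log ((a + s) ^ 2) =
          a ^ 2 * (Real.log ((a + s) ^ 2) - Real.log (a ^ 2))
          + (2 * a * s + s ^ 2) * (Real.log ((a + s) ^ 2) - Real.log (a ^ 2))
          + (a ^ 2 + 2 * a * s + s ^ 2) * Real.log (a ^ 2) := by ring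
      linarith [hA, hprod, htan, hmono, eid.le, eid.ge]
    · -- Region II : s > a/2
      have hs0 : 0 < s := by linarith
      have hupos : 0 < a + s := by linarith
      have h9 : Real.log ((a + s) ^ 2) - Real.log (s ^ 2) ≤ Real.log 9 := by
        have h4 : (a + s) ^ 2 ≤ 9 * s ^ 2 := by nlinarith
        have h5 := Real.log_le_log (by positivity : (0:ℝ) < (a + s) ^ 2) h4
        rw [Real.log_mul (by norm_num : (9:ℝ) ≠ 0) (by positivity : (s ^ 2 : ℝ) ≠ 0)] at h5
        linarith
      have hlog9 : Real.log 9 ≤ 8 := by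
        have := Real.log_le_sub_one_of_pos (show (0:ℝ) < 9 by norm_num); linarith
      have hlogu : Real.log ((a + s) ^ 2) ≤ 2 * ((a + s) / a - 1) + Real.log (a ^ 2) := by
        have h := Real.log_le_sub_one_of_pos (show (0:ℝ) < (a + s) / a by positivity)
        rw [Real.log_div hupos.ne' ha.ne'] at h
        rw [Real.log_pow, Real.log_pow]
        push_cast
        linarith
      have hfac : 0 ≤ a ^ 2 + 2 * a * s := by nlinarith [mul_pos ha hs0]
      have h10 := mul_le_mul_of_nonneg_left hlogu hfac
      have e : (a ^ 2 + 2 * a * s) * (2 * ((a + s) / a - 1) + Real.log (a ^ 2)) =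
          2 * a * s + 4 * s ^ 2 + (a ^ 2 + 2 * a * s) * Real.log (a ^ 2) := by
        field_simp; ring
      have h11 := mul_le_mul_of_nonneg_left h9 (sq_nonneg s)
      have h12 := mul_le_mul_of_nonneg_left hlog9 (sq_nonneg s)
      have hmono2 : 0 ≤ s ^ 2 * (Real.log (a ^ 2 + b2) - Real.log b2) :=
        mul_nonneg (sq_nonneg s) (by linarith)
      have hmono3 : 0 ≤ a ^ 2 * (Real.log (a ^ 2 + b2) - Real.log (a ^ 2)) :=
        mul_nonneg ha2.le (by linarith)
      have eid : (a + s) ^ 2 * Real.log ((a + s) ^ 2) =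
          (a ^ 2 + 2 * a * s) * Real.log ((a + s) ^ 2)
          + s ^ 2 * (Real.log ((a + s) ^ 2) - Real.log (s ^ 2)) + s ^ 2 * Real.log (s ^ 2) := by
        ring
      linarith [h10, e.le, e.ge, h11, h12, hmono2, hmono3, hb.le, sq_nonneg s,
        eid.le, eid.ge]

/-- Rothaus-type entropy bound: there is a constant `A > 0` (independent of `f`) such
that `Ent_E(f²) ≤ A·E(f − Ef)² + Ent_E((f − Ef)²)`, where
`Ent_E(g) = E(g log(g/Eg))`. -/
theorem rothaus_entropy_bound :
    ∃ A : ℝ, 0 < A ∧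
      ∀ (α : Type) (_ : MeasurableSpace α) (μ : Measure α),
        IsProbabilityMeasure μ → ∀ f : α → ℝ, (∀ x, 0 ≤ f x) →
        Integrable f μ → Integrable (fun x => (f x) ^ 2) μ →
        Integrable (fun x => (f x) ^ 2 * Real.log ((f x) ^ 2)) μ →
        Integrable (fun x => (f x - ∫ y, f y ∂μ) ^ 2 *
          Real.log ((f x - ∫ y, f y ∂μ) ^ 2)) μ →
        ∫ x, (f x) ^ 2 * Real.log ((f x) ^ 2 / ∫ y, (f y) ^ 2 ∂μ) ∂μ ≤
          A * (∫ x, (f x - ∫ y, f y ∂μ) ^ 2 ∂μ) +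
            ∫ x, (f x - ∫ y, f y ∂μ) ^ 2 *
              Real.log ((f x - ∫ y, f y ∂μ) ^ 2 /
                ∫ z, (f z - ∫ y, f y ∂μ) ^ 2 ∂μ) ∂μ := by
  refine ⟨26, by norm_num, ?_⟩
  intro α mα μ hμ f hf0 hf hf2 hflog hglog
  set a : ℝ := ∫ y, f y ∂μ with ha_def
  have hg : Integrable (fun x => f x - a) μ := hf.sub (integrable_const a)
  have hgm : Integrable (fun x => 2 * a * f x) μ := hf.const_mul (2 * a)
  have hi1 : Integrable (fun x => (f x) ^ 2 - 2 * a * f x) μ := hf2.sub hgm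
  have hg2 : Integrable (fun x => (f x - a) ^ 2) μ := by
    have e : (fun x => (f x - a) ^ 2) =
        fun x => ((f x) ^ 2 - 2 * a * f x) + a ^ 2 := by funext x; ring
    rw [e]
    exact hi1.add (integrable_const _)
  have hintg : ∫ x, (f x - a) ∂μ = 0 := by
    rw [integral_sub hf (integrable_const a), integral_const]
    simp [ha_def]
  set b2 : ℝ := ∫ x, (f x - a) ^ 2 ∂μ with hb2_def
  set t : ℝ := ∫ x, (f x) ^ 2 ∂μ with ht_def
  have hb2nn : 0 ≤ b2 := integral_nonneg fun x => sq_nonneg _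
  have ht_eq : t = a ^ 2 + b2 := by
    have ee : b2 = ∫ x, (((f x) ^ 2 - 2 * a * f x) + a ^ 2) ∂μ := by
      rw [hb2_def]
      exact integral_congr_ae (Filter.Eventually.of_forall fun x => by ring)
    rw [integral_add hi1 (integrable_const _), integral_sub hf2 hgm,
      integral_const_mul, integral_const] at ee
    simp only [measure_univ, probReal_univ, ENNReal.toReal_one, one_smul, smul_eq_mul] at ee
    rw [← ht_def, ← ha_def] at ee
    linarith [ee]
  have ha_nn : 0 ≤ a := integral_nonneg hf0
  rcases eq_or_lt_of_le hb2nn with hb20 | hb2pos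
  · -- degenerate case: variance zero
    have hg2z : (fun x => (f x - a) ^ 2) =ᵐ[μ] 0 := by
      rw [← integral_eq_zero_iff_of_nonneg (fun x => sq_nonneg _) hg2]
      exact hb20.symm
    have hfz : ∀ᵐ x ∂μ, f x = a := by
      filter_upwards [hg2z] with x hx
      have hx' : (f x - a) ^ 2 = 0 := hx
      nlinarith [hx']
    have hL : ∫ x, (f x) ^ 2 * Real.log ((f x) ^ 2 / t) ∂μ = 0 := by
      rw [show (0:ℝ) = ∫ _x, (0:ℝ) ∂μ by simp]
      apply integral_congr_ae
      filter_upwards [hfz] with x hx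
      rw [hx]
      rcases eq_or_ne a 0 with h0 | h0
      · simp [h0]
      · have hta : t = a ^ 2 := by rw [ht_eq, ← hb20]; ring
        rw [hta, div_self (by positivity : (a:ℝ) ^ 2 ≠ 0)]
        simp
    have hR : ∫ x, (f x - a) ^ 2 * Real.log ((f x - a) ^ 2 / b2) ∂μ = 0 := by
      rw [show (0:ℝ) = ∫ _x, (0:ℝ) ∂μ by simp]
      apply integral_congr_ae
      filter_upwards [hfz] with x hx
      rw [hx]
      simp
    rw [hL, hR, ← hb20]
    norm_num
  · -- main case: positive variance
    have hapos : 0 < a := by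
      rcases eq_or_lt_of_le ha_nn with h0 | h0
      · exfalso
        have hfz : (fun x => f x) =ᵐ[μ] 0 := by
          rw [← integral_eq_zero_iff_of_nonneg hf0 hf]
          exact h0.symm
        have hgz : (fun x => (f x - a) ^ 2) =ᵐ[μ] 0 := by
          filter_upwards [hfz] with x hx
          simp only [Pi.zero_apply] at hx ⊢
          rw [hx, ← h0]; ring
        have : b2 = 0 := by
          rw [hb2_def, integral_congr_ae hgz]
          simp
        linarith
      · exact h0
    have htpos : 0 < t := by rw [ht_eq]; positivity
    set c1 : ℝ := 25 + Real.log t - Real.log b2 with hc1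
    set c2 : ℝ := 2 * a * (1 + Real.log (a ^ 2)) with hc2
    set c3 : ℝ := b2 + a ^ 2 * Real.log t with hc3
    have key : ∀ x, (f x) ^ 2 * Real.log ((f x) ^ 2) - (f x - a) ^ 2 * Real.log ((f x - a) ^ 2) ≤
        c1 * (f x - a) ^ 2 + c2 * (f x - a) + c3 := by
      intro x
      have hsx : -a ≤ f x - a := by linarith [hf0 x]
      have hpt := rothaus_ptwise a b2 (f x - a) hapos hb2pos hsx
      rw [show a + (f x - a) = f x by ring] at hpt
      rw [← ht_eq] at hpt
      calc (f x) ^ 2 * Real.log ((f x) ^ 2) - (f x - a) ^ 2 * Real.log ((f x - a) ^ 2)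
          ≤ (25 + Real.log t - Real.log b2) * (f x - a) ^ 2
            + 2 * a * (1 + Real.log (a ^ 2)) * (f x - a) + b2 + a ^ 2 * Real.log t := hpt
        _ = c1 * (f x - a) ^ 2 + c2 * (f x - a) + c3 := by rw [hc1, hc2, hc3]; ring
    have hInt1 : Integrable (fun x => (f x) ^ 2 * Real.log ((f x) ^ 2)
        - (f x - a) ^ 2 * Real.log ((f x - a) ^ 2)) μ := hflog.sub hglog
    have hIc1 : Integrable (fun x => c1 * (f x - a) ^ 2) μ := hg2.const_mul c1
    have hIc2 : Integrable (fun x => c2 * (f x - a)) μ := hg.const_mul c2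
    have hIr1 : Integrable (fun x => c1 * (f x - a) ^ 2 + c2 * (f x - a)) μ := hIc1.add hIc2
    have hInt2 : Integrable (fun x => c1 * (f x - a) ^ 2 + c2 * (f x - a) + c3) μ :=
      hIr1.add (integrable_const c3)
    have hmono := integral_mono hInt1 hInt2 key
    rw [integral_sub hflog hglog, integral_add hIr1 (integrable_const c3),
      integral_add hIc1 hIc2, integral_const_mul, integral_const_mul, hintg,
      integral_const] at hmono
    simp only [measure_univ, probReal_univ, ENNReal.toReal_one, one_smul, smul_eq_mul, mul_zero,
      add_zero] at hmono
    rw [← hb2_def] at hmono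
    -- rewrite the entropy integrals
    have e1 : ∫ x, (f x) ^ 2 * Real.log ((f x) ^ 2 / t) ∂μ
        = (∫ x, (f x) ^ 2 * Real.log ((f x) ^ 2) ∂μ) - t * Real.log t := by
      have ep : ∀ x, (f x) ^ 2 * Real.log ((f x) ^ 2 / t)
          = (f x) ^ 2 * Real.log ((f x) ^ 2) - (f x) ^ 2 * Real.log t := by
        intro x
        rcases eq_or_ne (f x) 0 with h | h
        · simp [h]
        · rw [Real.log_div (pow_ne_zero 2 h) htpos.ne']; ring
      rw [integral_congr_ae (Filter.Eventually.of_forall ep),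
        integral_sub hflog (hf2.mul_const (Real.log t)), integral_mul_const]
    have e2 : ∫ x, (f x - a) ^ 2 * Real.log ((f x - a) ^ 2 / b2) ∂μ
        = (∫ x, (f x - a) ^ 2 * Real.log ((f x - a) ^ 2) ∂μ) - b2 * Real.log b2 := by
      have ep : ∀ x, (f x - a) ^ 2 * Real.log ((f x - a) ^ 2 / b2)
          = (f x - a) ^ 2 * Real.log ((f x - a) ^ 2) - (f x - a) ^ 2 * Real.log b2 := by
        intro x
        rcases eq_or_ne (f x - a) 0 with h | h
        · simp [h]
        · rw [Real.log_div (pow_ne_zero 2 h) hb2pos.ne']; ring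
      rw [integral_congr_ae (Filter.Eventually.of_forall ep),
        integral_sub hglog (hg2.mul_const (Real.log b2)), integral_mul_const]
    rw [e1, e2]
    have expand1 : c1 * b2 + c3 = 25 * b2 + b2 * Real.log t - b2 * Real.log b2 + b2
        + a ^ 2 * Real.log t := by rw [hc1, hc3]; ring
    have expand2 : t * Real.log t = a ^ 2 * Real.log t + b2 * Real.log t := by
      rw [ht_eq]; ring
    linarith [hmono, expand1.le, expand1.ge, expand2.le, expand2.ge]
end
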